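/- Let A = (a_{ih}) be an n×n complex matrix such that ‖exp(tA) x‖_∞ ≤ ‖x‖_∞ for all t ≥ 0 and x ∈ ℂⁿ. Then Re(a_{ii}) + Σ_{h≠i} |a_{ih}| ≤ 0 for all i = 1,…,n. -/

import Mathlib

open Matrix Finset

/-- If the semigroup generated by the complex matrix `A` is `ℓ∞`-contractive, then
`Re(a_ii) + ∑_{h≠i} |a_ih| ≤ 0` for all `i`. -/
theorem stmt_1 (n : ℕ) (A : Matrix (Fin n) (Fin n) ℂ)
    (hcontr : ∀ t : ℝ, 0 ≤ t → ∀ x : Fin n → ℂ,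
      ‖(NormedSpace.exp (t • A)).mulVec x‖ ≤ ‖x‖) :
    ∀ i : Fin n, (A i i).re + ∑ h ∈ Finset.univ.erase i, ‖A i h‖ ≤ 0 := by
  intro i
  classical
  letI : SeminormedRing (Matrix (Fin n) (Fin n) ℂ) := Matrix.linftyOpSemiNormedRing
  letI : NormedRing (Matrix (Fin n) (Fin n) ℂ) := Matrix.linftyOpNormedRing
  letI : NormedAlgebra ℝ (Matrix (Fin n) (Fin n) ℂ) := Matrix.linftyOpNormedAlgebra
  letI : NormedAlgebra ℂ (Matrix (Fin n) (Fin n) ℂ) := Matrix.linftyOpNormedAlgebra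
  -- the test vector
  set x : Fin n → ℂ := fun h => if h = i then 1 else
    if A i h = 0 then 0 else (starRingEnd ℂ) (A i h) / (‖A i h‖ : ℂ) with hx
  have hxi : x i = 1 := by simp [hx]
  have hxnorm : ∀ h, ‖x h‖ ≤ 1 := by
    intro h
    by_cases hh : h = i
    · simp [hx, hh]
    · by_cases hz : A i h = 0
      · simp [hx, hh, hz]
      · simp only [hx, if_neg hh, if_neg hz]
        rw [norm_div]
        simp [hz, norm_ne_zero_iff.mpr hz]
  have hxle : ‖x‖ ≤ 1 := by
    rw [pi_norm_le_iff_of_nonneg zero_le_one]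
    exact hxnorm
  -- the key value of `A.mulVec x` at `i`
  have hAx : (A.mulVec x) i = A i i + (↑(∑ h ∈ Finset.univ.erase i, ‖A i h‖) : ℂ) := by
    have h1 : (A.mulVec x) i = ∑ h, A i h * x h := by
      simp [Matrix.mulVec, dotProduct]
    rw [h1, ← Finset.add_sum_erase _ _ (Finset.mem_univ i), hxi, mul_one]
    congr 1
    push_cast
    apply Finset.sum_congr rfl
    intro h hh
    have hh' : h ≠ i := (Finset.mem_erase.mp hh).1
    by_cases hz : A i h = 0
    · simp [hx, hh', hz]
    · have hnz : (‖A i h‖ : ℂ) ≠ 0 := by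
        exact_mod_cast (norm_ne_zero_iff.mpr hz)
      simp only [hx, if_neg hh', if_neg hz]
      rw [mul_div_assoc', Complex.mul_conj']
      rw [sq]
      field_simp
  set c : ℝ := (A i i).re + ∑ h ∈ Finset.univ.erase i, ‖A i h‖ with hc
  -- the real-valued function
  set g : ℝ → ℝ := fun t => (((NormedSpace.exp (t • A)).mulVec x) i).re with hgdef
  have hg0 : g 0 = 1 := by
    simp [hgdef, hxi]
  have hgle : ∀ t : ℝ, 0 ≤ t → g t ≤ 1 := by
    intro t ht
    calc g t ≤ ‖((NormedSpace.exp (t • A)).mulVec x) i‖ := Complex.re_le_norm _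
      _ ≤ ‖(NormedSpace.exp (t • A)).mulVec x‖ := norm_le_pi_norm _ i
      _ ≤ ‖x‖ := hcontr t ht x
      _ ≤ 1 := hxle
  -- the derivative of exp at 0
  have hexp : HasDerivAt (fun t : ℝ => NormedSpace.exp (t • A)) A 0 := by
    have h := hasDerivAt_exp_smul_const (𝕂 := ℝ) A (0 : ℝ)
    rw [zero_smul, NormedSpace.exp_zero, one_mul] at h
    exact h
  -- the continuous linear functional M ↦ Re((M.mulVec x) i)
  let ψ : Matrix (Fin n) (Fin n) ℂ →ₗ[ℝ] ℝ :=
  { toFun := fun M => ((M.mulVec x) i).re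
    map_add' := fun M N => by simp [Matrix.add_mulVec]
    map_smul' := fun r M => by
      simp [Matrix.smul_mulVec, Complex.real_smul] }
  let ψC : Matrix (Fin n) (Fin n) ℂ →L[ℝ] ℝ := LinearMap.toContinuousLinearMap ψ
  have hder : HasDerivAt g c 0 := by
    have h := ψC.hasFDerivAt.comp_hasDerivAt 0 hexp
    have hval : ψC A = c := by
      show ((A.mulVec x) i).re = c
      rw [hAx, hc]
      simp
    have h' : HasDerivAt g (ψC A) 0 := h
    rw [hval] at h'
    exact h'
  -- derivative from the right is ≤ 0
  have hslope : Filter.Tendsto (slope g 0) (nhdsWithin 0 (Set.Ioi 0)) (nhds c) :=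
    (hasDerivAt_iff_tendsto_slope.mp hder).mono_left
      (nhdsWithin_mono 0 (fun y hy => ne_of_gt hy))
  have hcle : c ≤ 0 := by
    refine le_of_tendsto hslope ?_
    filter_upwards [self_mem_nhdsWithin] with t ht
    have ht' : (0 : ℝ) < t := ht
    rw [slope_def_field]
    simp only [sub_zero]
    apply div_nonpos_of_nonpos_of_nonneg
    · rw [hg0]
      linarith [hgle t ht'.le]
    · exact ht'.le
  exact hcle
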